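/- Let Hor be a symmetric nonlinear connection on T*M and H ∈ C^∞(T*M) with d^H H = 0. Then every integral section α ∈ Γ(T*M) of Hor (i.e. Tα(v) = ξ^H(α(τ_M(v)), v) for all v ∈ TM) is a closed 1-form on which H is locally constant; i.e. α is a solution of the Hamilton–Jacobi equation for H. -/

import Mathlib

noncomputable section

/-- The cotangent bundle `T*M` of `M = ℝⁿ` in canonical coordinates `(x, p)`. -/
abbrev TT (n : ℕ) := (Fin n → ℝ) × (Fin n → ℝ)

/-- The canonical symplectic form `ω₀ = −dθ₀ = dxⁱ ∧ dpᵢ` of `T*M`. -/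
def ωc {n : ℕ} (a b : TT n) : ℝ := (∑ i, a.1 i * b.2 i) - ∑ i, b.1 i * a.2 i

/-- Horizontal lift of a vector field `X` along `π_M` for the Ehresmann connection with
coefficients `Γ` (so `H_i = ∂/∂xⁱ − Γᵢⱼ ∂/∂pⱼ`, `Γᵢⱼ = Γ i p j`). -/
def hlC {n : ℕ} (Γ : Fin n → TT n → (Fin n → ℝ)) (X : TT n → (Fin n → ℝ))
    (p : TT n) : TT n :=
  (X p, fun j => -(∑ i, X p i * Γ i p j))

/-- The horizontal differential `d^H f` of `f ∈ C^∞(T*M)`: `⟨d^H f, X⟩ = X^H(f)`,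
so `(d^H f)ᵢ = H_i(f)`. -/
def dHf {n : ℕ} (Γ : Fin n → TT n → (Fin n → ℝ)) (f : TT n → ℝ) (p : TT n) :
    Fin n → ℝ :=
  fun i => fderiv ℝ f p (Pi.single i 1, -(Γ i p))

/-- The vertical differential `d^V f` of `f ∈ C^∞(T*M)`: `⟨α, d^V f⟩ = α^V(f)`,
so `(d^V f)ⁱ = ∂f/∂pᵢ`. -/
def dVf {n : ℕ} (f : TT n → ℝ) (p : TT n) : Fin n → ℝ :=
  fun i => fderiv ℝ f p (0, Pi.single i 1)

/-- Let `Hor` be a symmetric nonlinear connection on `T*M` (horizontal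
subbundle Lagrangian for `ω₀`) and `H ∈ C^∞(T*M)` with `d^H H = 0`.  Then every integral
section `α` of `Hor` (i.e. `Tα(v) = ξ^H(α(x), v)`, in coordinates
`∂αⱼ/∂xᵢ(x) = −Γᵢⱼ(x, α(x))`) is a closed 1-form on which `H` is locally constant; i.e.
`α` is a solution of the Hamilton–Jacobi equation for `H`. -/
theorem integral_section_solves_hamilton_jacobi {n : ℕ}
    (Γ : Fin n → TT n → (Fin n → ℝ)) (H : TT n → ℝ)
    (α : (Fin n → ℝ) → (Fin n → ℝ))
    (hH : Differentiable ℝ H) (hα : Differentiable ℝ α)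
    (hsym : ∀ (X Y : TT n → (Fin n → ℝ)) (p : TT n), ωc (hlC Γ X p) (hlC Γ Y p) = 0)
    (hdH : ∀ (p : TT n) (i : Fin n), fderiv ℝ H p (Pi.single i 1, -(Γ i p)) = 0)
    (hint : ∀ (x : Fin n → ℝ) (v : Fin n → ℝ),
      fderiv ℝ α x v = fun j => -∑ i, v i * Γ i (x, α x) j) :
    (∀ (x : Fin n → ℝ) (i j : Fin n),
      fderiv ℝ (fun y => α y j) x (Pi.single i 1)
        = fderiv ℝ (fun y => α y i) x (Pi.single j 1)) ∧
    (∀ (x v : Fin n → ℝ), fderiv ℝ (fun y => H (y, α y)) x v = 0) := by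
  -- Γ is symmetric: Γ i p j = Γ j p i
  have hΓsym : ∀ (p : TT n) (i j : Fin n), Γ i p j = Γ j p i := by
    intro p i j
    have h := hsym (fun _ => Pi.single i 1) (fun _ => Pi.single j 1) p
    simp [ωc, hlC, Pi.single_apply, ite_mul, Finset.sum_ite_eq,
      Finset.sum_ite_eq'] at h
    linarith
  -- component derivatives of α
  have hcomp : ∀ (x : Fin n → ℝ) (j : Fin n) (w : Fin n → ℝ),
      fderiv ℝ (fun y => α y j) x w = fderiv ℝ α x w j := by
    intro x j w
    have hd := (hα x).hasFDerivAt
    have := ((ContinuousLinearMap.proj (R := ℝ) (φ := fun _ : Fin n => ℝ) j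
        ).hasFDerivAt.comp x hd).fderiv
    rw [show (fun y => α y j) = (ContinuousLinearMap.proj (R := ℝ)
        (φ := fun _ : Fin n => ℝ) j) ∘ α from rfl, this]
    rfl
  have hsingle : ∀ (x : Fin n → ℝ) (i j : Fin n),
      fderiv ℝ (fun y => α y j) x (Pi.single i 1) = -(Γ i (x, α x) j) := by
    intro x i j
    rw [hcomp, hint]
    simp only
    rw [Finset.sum_eq_single i]
    · simp
    · intro b _ hb; simp [Pi.single_apply, hb]
    · simp
  constructor
  · intro x i j
    rw [hsingle, hsingle, hΓsym]
  · intro x v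
    have hd := (hα x).hasFDerivAt
    have hF : HasFDerivAt (fun y : Fin n → ℝ => ((y, α y) : TT n))
        ((ContinuousLinearMap.id ℝ (Fin n → ℝ)).prod (fderiv ℝ α x)) x :=
      HasFDerivAt.prodMk (hasFDerivAt_id x) hd
    have hHF := ((hH (x, α x)).hasFDerivAt.comp x hF).fderiv
    rw [show (fun y => H (y, α y)) = H ∘ (fun y => (y, α y)) from rfl, hHF]
    simp only [ContinuousLinearMap.coe_comp', Function.comp_apply,
      ContinuousLinearMap.prod_apply, ContinuousLinearMap.coe_id', id_eq]
    have key : ((v, fderiv ℝ α x v) : TT n)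
        = ∑ i, v i • ((Pi.single i 1, -(Γ i (x, α x))) : TT n) := by
      rw [Prod.ext_iff]
      constructor
      · simp only [Prod.fst_sum, Prod.smul_fst]
        funext j
        simp [Finset.sum_apply, Pi.single_apply, mul_ite]
      · simp only [Prod.snd_sum, Prod.smul_snd]
        rw [hint]
        funext j
        simp [Finset.sum_apply, mul_neg, Finset.sum_neg_distrib]
    rw [key, map_sum]
    refine Finset.sum_eq_zero fun i _ => ?_
    rw [map_smul, hdH]
    simp
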